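/- arXiv:2508.00154 — 3 statements merged into one kernel-verified Lean document; each statement's English description precedes it below -/
import Mathlib

section
/- Let P be a symmetric positive definite n×n matrix, F a row vector (1×n matrix), and g > 0 a scalar. The ellipsoid E(P,0) = {x ∈ ℝⁿ : xᵀ P⁻¹ x ≤ 1} is contained in the half-space {x : Fx ≤ g} if and only if F P Fᵀ ≤ g². -/
open Matrix

lemma symm_dot {n : ℕ} {M : Matrix (Fin n) (Fin n) ℝ} (hM : Mᵀ = M)
    (u w : Fin n → ℝ) : u ⬝ᵥ M *ᵥ w = w ⬝ᵥ M *ᵥ u := by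
  rw [dotProduct_mulVec, ← mulVec_transpose, hM, dotProduct_comm]

/-- The ellipsoid `{x : xᵀP⁻¹x ≤ 1}` is contained in the half-space `{x : Fx ≤ g}`
(with `g > 0`) iff `F P Fᵀ ≤ g²`. -/
theorem stmt2 {n : ℕ} (P : Matrix (Fin n) (Fin n) ℝ) (hP : P.PosDef)
    (F : Fin n → ℝ) (g : ℝ) (hg : 0 < g) :
    {x : Fin n → ℝ | x ⬝ᵥ P⁻¹ *ᵥ x ≤ 1} ⊆ {x : Fin n → ℝ | F ⬝ᵥ x ≤ g} ↔
      F ⬝ᵥ P *ᵥ F ≤ g ^ 2 := by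
  have hQ : (P⁻¹).PosDef := hP.inv
  have hPsymm : Pᵀ = P := by
    have := hP.isHermitian
    simpa [Matrix.IsHermitian, Matrix.conjTranspose_eq_transpose_of_trivial] using this
  have hinv : P⁻¹ * P = 1 := Matrix.nonsing_inv_mul P hP.det_pos.ne'.isUnit
  set v : Fin n → ℝ := P *ᵥ F with hv
  set C : ℝ := F ⬝ᵥ P *ᵥ F with hC
  have hQv : P⁻¹ *ᵥ v = F := by
    rw [hv, mulVec_mulVec, hinv, one_mulVec]
  have hFv : F ⬝ᵥ v = C := rfl
  have hCnn : 0 ≤ C := by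
    have := hP.posSemidef.re_dotProduct_nonneg F
    simpa using this
  -- for any x: (F ⬝ᵥ x)^2 ≤ C * (x ⬝ᵥ P⁻¹ *ᵥ x)
  have key : ∀ x : Fin n → ℝ, (F ⬝ᵥ x) ^ 2 ≤ C * (x ⬝ᵥ P⁻¹ *ᵥ x) := by
    intro x
    set A : ℝ := x ⬝ᵥ P⁻¹ *ᵥ x with hA
    set B : ℝ := F ⬝ᵥ x with hB
    have hquad : ∀ t : ℝ, 0 ≤ C * (t * t) + (-2 * B) * t + A := by
      intro t
      have h0 : 0 ≤ (x - t • v) ⬝ᵥ P⁻¹ *ᵥ (x - t • v) := by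
        have := hQ.posSemidef.re_dotProduct_nonneg (x - t • v)
        simpa using this
      have hxQv : x ⬝ᵥ P⁻¹ *ᵥ v = B := by rw [hQv, dotProduct_comm]
      have hvQx : v ⬝ᵥ P⁻¹ *ᵥ x = B := by
        rw [symm_dot (by rw [Matrix.transpose_nonsing_inv, hPsymm]) v x, hxQv]
      have hvQv : v ⬝ᵥ P⁻¹ *ᵥ v = C := by
        rw [hQv]; rw [hv, dotProduct_comm]
      have expand : (x - t • v) ⬝ᵥ P⁻¹ *ᵥ (x - t • v)
          = A - t * B - t * B + t * t * C := by
        rw [Matrix.mulVec_sub, Matrix.mulVec_smul, dotProduct_sub, sub_dotProduct,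
          sub_dotProduct, dotProduct_smul, smul_dotProduct, smul_dotProduct,
          dotProduct_smul, hxQv, hvQx, hvQv]
        simp only [smul_eq_mul]
        ring
      rw [expand] at h0
      nlinarith [h0]
    have hd := discrim_le_zero hquad
    rw [discrim] at hd
    nlinarith [hd]
  constructor
  · intro h
    by_contra hlt
    push_neg at hlt
    have hCpos : 0 < C := lt_trans (by positivity) hlt
    set t : ℝ := 2 * g / (C + g ^ 2) with ht
    have hden : 0 < C + g ^ 2 := by positivity
    have hmem : (t • v) ⬝ᵥ P⁻¹ *ᵥ (t • v) ≤ 1 := by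
      have hvQv : v ⬝ᵥ P⁻¹ *ᵥ v = C := by
        rw [hQv]; rw [hv, dotProduct_comm]
      rw [Matrix.mulVec_smul, smul_dotProduct, dotProduct_smul, hvQv]
      have : (2 * g) ^ 2 * C ≤ (C + g ^ 2) ^ 2 := by nlinarith [sq_nonneg (C - g ^ 2)]
      rw [ht, smul_eq_mul, smul_eq_mul]
      have h1 : 2 * g / (C + g ^ 2) * (2 * g / (C + g ^ 2) * C)
          = (2 * g) ^ 2 * C / ((C + g ^ 2) * (C + g ^ 2)) := by
        field_simp
      rw [h1, div_le_one (by positivity)]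
      nlinarith [this]
    have hFx : F ⬝ᵥ (t • v) = t * C := by
      rw [dotProduct_smul, hFv, smul_eq_mul]
    have := h hmem
    rw [Set.mem_setOf_eq, hFx, ht] at this
    rw [div_mul_eq_mul_div, div_le_iff₀ hden] at this
    nlinarith [this, hlt, hg]
  · intro hFPF x hx
    rw [Set.mem_setOf_eq] at hx ⊢
    have h1 := key x
    have h2 : (F ⬝ᵥ x) ^ 2 ≤ g ^ 2 := by
      calc (F ⬝ᵥ x) ^ 2 ≤ C * (x ⬝ᵥ P⁻¹ *ᵥ x) := h1
        _ ≤ C * 1 := by exact mul_le_mul_of_nonneg_left hx hCnn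
        _ = C := mul_one C
        _ ≤ g ^ 2 := hFPF
    nlinarith [h2, hg]
end

section
/- Let P₁,…,P_m be symmetric positive definite n×n matrices and let S_c = Co(E(P₁,0),…,E(P_m,0)) be the convex hull of the origin-centered ellipsoids E(Pⱼ,0). For any nonnegative coefficients α₁,…,α_m with ∑ⱼ αⱼ = 1, the ellipsoid E(∑ⱼ αⱼ Pⱼ, 0) is contained in S_c. -/
open Matrix

private theorem quad_sum' {n m : ℕ} (P : Fin m → Matrix (Fin n) (Fin n) ℝ) (α : Fin m → ℝ)
    (v : Fin n → ℝ) :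
    v ⬝ᵥ (∑ j : Fin m, α j • P j) *ᵥ v = ∑ j : Fin m, α j * (v ⬝ᵥ P j *ᵥ v) := by
  simp only [Matrix.mulVec, dotProduct, Matrix.sum_apply, Matrix.smul_apply,
    smul_eq_mul, Finset.sum_mul, Finset.mul_sum]
  have swap : ∀ f : Fin n → Fin n → Fin m → ℝ,
      ∑ x : Fin n, ∑ i : Fin n, ∑ j : Fin m, f x i j
        = ∑ j : Fin m, ∑ x : Fin n, ∑ i : Fin n, f x i j := by
    intro f
    rw [show (∑ x : Fin n, ∑ i : Fin n, ∑ j : Fin m, f x i j)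
        = ∑ x : Fin n, ∑ j : Fin m, ∑ i : Fin n, f x i j from
      Finset.sum_congr rfl fun x _ => Finset.sum_comm]
    exact Finset.sum_comm
  rw [swap fun x i j => v x * (α j * P j x i * v i)]

  exact Finset.sum_congr rfl fun j _ => Finset.sum_congr rfl fun x _ =>
    Finset.sum_congr rfl fun i _ => by ring

private theorem sum_smul_mulVec' {n m : ℕ} (P : Fin m → Matrix (Fin n) (Fin n) ℝ)
    (α : Fin m → ℝ) (v : Fin n → ℝ) :
    (∑ j : Fin m, α j • P j) *ᵥ v = ∑ j : Fin m, α j • (P j *ᵥ v) := by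
  funext i
  simp only [Matrix.mulVec, dotProduct, Matrix.sum_apply, Matrix.smul_apply,
    Finset.sum_apply, Pi.smul_apply, smul_eq_mul, Finset.sum_mul, Finset.mul_sum]
  rw [Finset.sum_comm]
  exact Finset.sum_congr rfl fun j _ => Finset.sum_congr rfl fun k _ => by ring

/-- For positive definite `P₁,…,P_m` and convex coefficients `αⱼ`, the ellipsoid
with shape matrix `∑ⱼ αⱼ Pⱼ` is contained in the convex hull of the ellipsoids
`E(Pⱼ,0)`. -/
theorem stmt6 {n m : ℕ} (P : Fin m → Matrix (Fin n) (Fin n) ℝ)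
    (hP : ∀ j, (P j).PosDef) (α : Fin m → ℝ)
    (hα : ∀ j, 0 ≤ α j) (hα1 : ∑ j, α j = 1) :
    {x : Fin n → ℝ | x ⬝ᵥ (∑ j, α j • P j)⁻¹ *ᵥ x ≤ 1} ⊆
      convexHull ℝ (⋃ j, {x : Fin n → ℝ | x ⬝ᵥ (P j)⁻¹ *ᵥ x ≤ 1}) := by
  intro x hx
  simp only [Set.mem_setOf_eq] at hx
  have hm : 0 < m := by
    rcases Nat.eq_zero_or_pos m with h | h
    · exfalso; subst h; simp at hα1
    · exact h
  set Q : Matrix (Fin n) (Fin n) ℝ := ∑ j, α j • P j with hQdef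
  -- Q is positive definite
  have hQ : Q.PosDef := by
    obtain ⟨j0, hj0⟩ : ∃ j, 0 < α j := by
      by_contra h
      push_neg at h
      have : ∀ j, α j = 0 := fun j => le_antisymm (h j) (hα j)
      simp [this] at hα1
    refine Matrix.PosDef.of_dotProduct_mulVec_pos ?_ ?_
    · unfold Matrix.IsHermitian
      simp only [hQdef, conjTranspose_sum, conjTranspose_smul]
      exact Finset.sum_congr rfl fun j _ => by rw [(hP j).1.eq]; norm_num
    · intro v hv
      have hsv : (star v : Fin n → ℝ) = v := by simp
      rw [hsv, hQdef, quad_sum']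
      have hterm : ∀ j ∈ Finset.univ, 0 ≤ α j * (v ⬝ᵥ P j *ᵥ v) := fun j _ =>
        mul_nonneg (hα j) (by simpa using (hP j).posSemidef.dotProduct_mulVec_nonneg v)
      have hpos : 0 < α j0 * (v ⬝ᵥ P j0 *ᵥ v) :=
        mul_pos hj0 (by simpa using (hP j0).dotProduct_mulVec_pos hv)
      exact Finset.sum_pos' hterm ⟨j0, Finset.mem_univ _, hpos⟩
  have hQdet : IsUnit Q.det := hQ.det_pos.ne'.isUnit
  set w : Fin n → ℝ := Q⁻¹ *ᵥ x with hwdef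
  have hQw : Q *ᵥ w = x := by
    rw [hwdef, mulVec_mulVec, Matrix.mul_nonsing_inv _ hQdet, one_mulVec]
  clear_value w
  set t : Fin m → ℝ := fun j => w ⬝ᵥ (P j *ᵥ w) with htdef
  have ht0 : ∀ j, 0 ≤ t j := fun j => by simpa using (hP j).posSemidef.dotProduct_mulVec_nonneg w
  have hwzero : ∀ j, t j = 0 → w = 0 := by
    intro j hj
    by_contra hw
    have := (hP j).dotProduct_mulVec_pos hw
    simp only [show (star w : Fin n → ℝ) = w by simp] at this
    exact this.ne' hj
  have hsumt : ∑ j, α j * t j ≤ 1 := by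
    have h1 : ∑ j, α j * t j = w ⬝ᵥ Q *ᵥ w := (quad_sum' P α w).symm
    rw [h1, hQw, dotProduct_comm]
    exact hx
  set y : Fin m → Fin n → ℝ := fun j => P j *ᵥ w with hydef
  -- value of the quadratic form at y j
  have hyq : ∀ j, y j ⬝ᵥ (P j)⁻¹ *ᵥ y j = t j := by
    intro j
    have hdet : IsUnit (P j).det := (hP j).det_pos.ne'.isUnit
    show (P j *ᵥ w) ⬝ᵥ (P j)⁻¹ *ᵥ (P j *ᵥ w) = w ⬝ᵥ (P j *ᵥ w)
    rw [mulVec_mulVec, Matrix.nonsing_inv_mul _ hdet, one_mulVec, dotProduct_comm]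
  set z : Fin m → Fin n → ℝ := fun j =>
    if t j = 0 then 0 else (Real.sqrt (t j))⁻¹ • y j with hzdef
  have hzmem : ∀ j, z j ∈ ⋃ j, {x : Fin n → ℝ | x ⬝ᵥ (P j)⁻¹ *ᵥ x ≤ 1} := by
    intro j
    refine Set.mem_iUnion.2 ⟨j, ?_⟩
    simp only [Set.mem_setOf_eq, hzdef]
    by_cases h : t j = 0
    · simp [h]
    · have htpos : 0 < t j := lt_of_le_of_ne (ht0 j) (Ne.symm h)
      have hs : Real.sqrt (t j) ≠ 0 := by positivity
      simp only [if_neg h, mulVec_smul, dotProduct_smul, smul_dotProduct, smul_eq_mul]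
      rw [hyq j]
      rw [← mul_assoc, ← mul_inv, Real.mul_self_sqrt (ht0 j)]
      rw [inv_mul_cancel₀ h]
  have hrep : ∀ j, Real.sqrt (t j) • z j = y j := by
    intro j
    simp only [hzdef]
    by_cases h : t j = 0
    · simp only [if_pos h, smul_zero]
      rw [hydef]
      simp [hwzero j h]
    · have htpos : 0 < t j := lt_of_le_of_ne (ht0 j) (Ne.symm h)
      have hs : Real.sqrt (t j) ≠ 0 := by positivity
      rw [if_neg h, smul_smul, mul_inv_cancel₀ hs, one_smul]
  set β : Fin m → ℝ := fun j => α j * Real.sqrt (t j) with hβdef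
  have hβ0 : ∀ j, 0 ≤ β j := fun j => mul_nonneg (hα j) (Real.sqrt_nonneg _)
  have hB1 : ∑ j, β j ≤ 1 := by
    have key : ∑ j, β j = ∑ j, Real.sqrt (α j) * Real.sqrt (α j * t j) := by
      refine Finset.sum_congr rfl fun j _ => ?_
      rw [Real.sqrt_mul (hα j), ← mul_assoc, Real.mul_self_sqrt (hα j)]
    rw [key]
    calc ∑ j, Real.sqrt (α j) * Real.sqrt (α j * t j)
        ≤ Real.sqrt (∑ j, α j) * Real.sqrt (∑ j, α j * t j) :=
          Real.sum_sqrt_mul_sqrt_le _ hα (fun j => mul_nonneg (hα j) (ht0 j))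
      _ ≤ 1 := by
          rw [hα1, Real.sqrt_one, one_mul]
          exact Real.sqrt_le_one.2 hsumt
  have hxrep : ∑ j, β j • z j = x := by
    have h1 : ∀ j, β j • z j = α j • y j := by
      intro j
      rw [hβdef]
      simp only
      rw [mul_smul, hrep j]
    rw [Finset.sum_congr rfl fun j _ => h1 j]
    rw [← sum_smul_mulVec', ← hQdef, hQw]
  -- conclude via convex combination (with slack absorbed at 0)
  have h0mem : (0 : Fin n → ℝ) ∈ ⋃ j, {x : Fin n → ℝ | x ⬝ᵥ (P j)⁻¹ *ᵥ x ≤ 1} :=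
    Set.mem_iUnion.2 ⟨⟨0, hm⟩, by simp⟩
  have hconv : Convex ℝ (convexHull ℝ (⋃ j, {x : Fin n → ℝ | x ⬝ᵥ (P j)⁻¹ *ᵥ x ≤ 1})) :=
    convex_convexHull ℝ _
  have hmem := hconv.sum_mem (t := (Finset.univ : Finset (Option (Fin m))))
    (w := fun o => Option.elim o (1 - ∑ j, β j) β)
    (z := fun o => Option.elim o 0 z)
    (fun o _ => by
      cases o with
      | none => simpa using sub_nonneg.2 hB1
      | some j => exact hβ0 j)
    (by simp [Fintype.sum_option])
    (fun o _ => by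
      cases o with
      | none => exact subset_convexHull ℝ _ h0mem
      | some j => exact subset_convexHull ℝ _ (hzmem j))
  rw [Fintype.sum_option] at hmem
  simpa [hxrep] using hmem
end

section
/- Suppose vectors ζ_{k} evolve by ζ_{k+1} = A_l ζ_k + A_n w_k where w_k satisfies wᵀ_k w_k ≤ ζᵀ_k Qᵀ Q ζ_k, ‖A_n‖₂ ≤ γ, γ² Qᵀ Q ⪯ P⁻¹, ε ≥ λ_max(P⁻¹), and (λ − ε(1+τ⁻¹)) P⁻¹ ⪰ (1+τ) A_lᵀ P⁻¹ A_l for some τ > 0 and 0 < λ ≤ 1 with λ − ε(1+τ⁻¹) > 0. Then ζᵀ_{k+1} P⁻¹ ζ_{k+1} ≤ λ ζᵀ_k P⁻¹ ζ_k; in particular the ellipsoid {ζ : ζᵀ P⁻¹ ζ ≤ 1} is λ-contractive (hence invariant) for the dynamics. -/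
open Matrix

/-- Quadratic form bounded by the largest eigenvalue times the norm. -/
lemma quad_le_eig_bound {n : Type*} [Fintype n] [DecidableEq n] {M : Matrix n n ℝ}
    (hM : M.IsHermitian) {ε : ℝ} (hε : ∀ i, hM.eigenvalues i ≤ ε) (x : n → ℝ) :
    x ⬝ᵥ M *ᵥ x ≤ ε * (x ⬝ᵥ x) := by
  have hps : (ε • (1 : Matrix n n ℝ) - M).PosSemidef := by
    have hst := hM.spectral_theorem
    set U := (hM.eigenvectorUnitary : Matrix n n ℝ) with hUdef
    have hUU : U * star U = 1 := (Matrix.mem_unitaryGroup_iff).mp hM.eigenvectorUnitary.2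
    have hdiag : Matrix.diagonal (fun i => ε - hM.eigenvalues i)
        = ε • (1 : Matrix n n ℝ) - Matrix.diagonal (RCLike.ofReal ∘ hM.eigenvalues) := by
      ext i j
      by_cases h : i = j <;> simp [Matrix.diagonal, h, Matrix.one_apply]
    have key : ε • (1 : Matrix n n ℝ) - M
        = U * Matrix.diagonal (fun i => ε - hM.eigenvalues i) * star U := by
      rw [hdiag, mul_sub, sub_mul, Matrix.mul_smul, Matrix.smul_mul, mul_one, hUU]; exact congrArg _ hst
    rw [key]
    exact (Matrix.PosSemidef.diagonal (fun i => sub_nonneg.mpr (hε i))).mul_mul_conjTranspose_same U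
  have h0 := hps.dotProduct_mulVec_nonneg x
  simp only [Matrix.sub_mulVec, dotProduct_sub, Matrix.smul_mulVec, Matrix.one_mulVec,
    dotProduct_smul, smul_eq_mul, star_trivial] at h0
  linarith

lemma dp_self_nonneg {n : Type*} [Fintype n] (v : n → ℝ) : 0 ≤ v ⬝ᵥ v :=
  Finset.sum_nonneg fun i _ => mul_self_nonneg (v i)

lemma quad_sym {n : Type*} [Fintype n] {M : Matrix n n ℝ} (hM : Mᵀ = M) (u v : n → ℝ) :
    u ⬝ᵥ M *ᵥ v = v ⬝ᵥ M *ᵥ u := by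
  rw [Matrix.dotProduct_mulVec, ← Matrix.mulVec_transpose, hM, dotProduct_comm]

/-- λ-contractivity of the ellipsoid `{ζ : ζᵀP⁻¹ζ ≤ 1}` for the perturbed
dynamics `ζ⁺ = A_l ζ + A_n w` under the stated data-driven conditions. -/
theorem stmt12 {p q : ℕ} (Al : Matrix (Fin p) (Fin p) ℝ)
    (An : Matrix (Fin p) (Fin q) ℝ) (Q : Matrix (Fin p) (Fin p) ℝ)
    (P : Matrix (Fin p) (Fin p) ℝ) (hP : P.PosDef)
    (γ ε τ lam : ℝ) (hγ : 0 ≤ γ) (hτ : 0 < τ) (hlam0 : 0 < lam) (hlam1 : lam ≤ 1)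
    (hmargin : 0 < lam - ε * (1 + τ⁻¹))
    (hAn : ∀ w : Fin q → ℝ,
      Real.sqrt ((An *ᵥ w) ⬝ᵥ (An *ᵥ w)) ≤ γ * Real.sqrt (w ⬝ᵥ w))
    (hQP : (P⁻¹ - (γ ^ 2) • (Qᵀ * Q)).PosSemidef)
    (hεmax : ∀ i, hP.inv.1.eigenvalues i ≤ ε)
    (hLMI : ((lam - ε * (1 + τ⁻¹)) • P⁻¹ - (1 + τ) • (Alᵀ * P⁻¹ * Al)).PosSemidef) :
    ∀ ζ : Fin p → ℝ, ∀ w : Fin q → ℝ,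
      w ⬝ᵥ w ≤ ζ ⬝ᵥ (Qᵀ * Q) *ᵥ ζ →
      ((Al *ᵥ ζ + An *ᵥ w) ⬝ᵥ P⁻¹ *ᵥ (Al *ᵥ ζ + An *ᵥ w) ≤ lam * (ζ ⬝ᵥ P⁻¹ *ᵥ ζ)) ∧
      (ζ ⬝ᵥ P⁻¹ *ᵥ ζ ≤ 1 →
        (Al *ᵥ ζ + An *ᵥ w) ⬝ᵥ (lam • P)⁻¹ *ᵥ (Al *ᵥ ζ + An *ᵥ w) ≤ 1) := by
  intro ζ w hw
  set M := P⁻¹ with hMdef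
  have hMpd : M.PosDef := hP.inv
  have hMps : M.PosSemidef := hMpd.posSemidef
  have hMsym : Mᵀ = M := by
    have := hMpd.1.eq
    simpa using this
  set a := Al *ᵥ ζ with ha
  set b := An *ᵥ w with hb
  set qa := a ⬝ᵥ M *ᵥ a with hqa
  set qb := b ⬝ᵥ M *ᵥ b with hqb
  set qab := a ⬝ᵥ M *ᵥ b with hqab
  set V := ζ ⬝ᵥ M *ᵥ ζ with hV
  -- expansion
  have hexp : (a + b) ⬝ᵥ M *ᵥ (a + b) = qa + 2 * qab + qb := by
    have hba : b ⬝ᵥ M *ᵥ a = qab := (quad_sym hMsym b a)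
    simp only [Matrix.mulVec_add, dotProduct_add, add_dotProduct]
    rw [hba]; ring
  -- cross bound
  have hcross : 2 * qab ≤ τ * qa + τ⁻¹ * qb := by
    have h0 := hMps.dotProduct_mulVec_nonneg (τ • a - b)
    have hba : b ⬝ᵥ M *ᵥ a = qab := (quad_sym hMsym b a)
    simp only [star_trivial, Matrix.mulVec_sub, Matrix.mulVec_smul, dotProduct_sub,
      dotProduct_smul, sub_dotProduct, smul_dotProduct, smul_eq_mul] at h0
    rw [hba] at h0
    have h0' : 0 ≤ τ ^ 2 * qa - 2 * τ * qab + qb := by nlinarith [h0]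
    have hτ' : τ * τ⁻¹ = 1 := mul_inv_cancel₀ hτ.ne'
    have h2 : τ * 0 ≤ τ * (τ * qa + τ⁻¹ * qb - 2 * qab) := by
      have heq : τ * (τ * qa + τ⁻¹ * qb - 2 * qab) = τ ^ 2 * qa - 2 * τ * qab + τ * τ⁻¹ * qb := by
        ring
      rw [heq, hτ']
      linarith
    have h3 := le_of_mul_le_mul_left h2 hτ
    linarith
  -- qa bound from LMI
  have hqaV : (1 + τ) * qa ≤ (lam - ε * (1 + τ⁻¹)) * V := by
    have h0 := hLMI.dotProduct_mulVec_nonneg ζ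
    have hq : ζ ⬝ᵥ (Alᵀ * M * Al) *ᵥ ζ = qa := by
      rw [hqa, ha, ← Matrix.mulVec_mulVec, ← Matrix.mulVec_mulVec,
        Matrix.dotProduct_mulVec ζ Alᵀ, ← Matrix.mulVec_transpose, Matrix.transpose_transpose]
    simp only [star_trivial, Matrix.sub_mulVec, dotProduct_sub, Matrix.smul_mulVec,
      dotProduct_smul, smul_eq_mul] at h0
    rw [hq] at h0
    linarith
  -- qb bound
  have hbb : b ⬝ᵥ b ≤ γ ^ 2 * (w ⬝ᵥ w) := by
    have h := hAn w
    have hbnn : 0 ≤ b ⬝ᵥ b := dp_self_nonneg b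
    have hwnn : 0 ≤ w ⬝ᵥ w := dp_self_nonneg w
    have h2 : Real.sqrt (b ⬝ᵥ b) ^ 2 ≤ (γ * Real.sqrt (w ⬝ᵥ w)) ^ 2 := by
      have hnn : 0 ≤ Real.sqrt (b ⬝ᵥ b) := Real.sqrt_nonneg _
      nlinarith [h, hnn]
    rw [Real.sq_sqrt hbnn] at h2
    calc b ⬝ᵥ b ≤ (γ * Real.sqrt (w ⬝ᵥ w)) ^ 2 := h2
      _ = γ ^ 2 * (w ⬝ᵥ w) := by rw [mul_pow, Real.sq_sqrt hwnn]
  have hγQ : γ ^ 2 * (ζ ⬝ᵥ (Qᵀ * Q) *ᵥ ζ) ≤ V := by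
    have h0 := hQP.dotProduct_mulVec_nonneg ζ
    simp only [star_trivial, Matrix.sub_mulVec, dotProduct_sub, Matrix.smul_mulVec,
      dotProduct_smul, smul_eq_mul] at h0
    linarith
  have hqbV : qb ≤ ε * V := by
    rcases Nat.eq_zero_or_pos p with hp | hp
    · subst hp
      have hqb0 : qb = 0 := by simp [hqb, dotProduct]
      have hV0 : V = 0 := by simp [hV, dotProduct]
      rw [hqb0, hV0, mul_zero]
    · have hε0 : 0 ≤ ε := by
        have := hMpd.eigenvalues_pos ⟨0, hp⟩
        exact le_of_lt (lt_of_lt_of_le this (hεmax _))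
      have h1 : qb ≤ ε * (b ⬝ᵥ b) := quad_le_eig_bound hMpd.1 hεmax b
      have h2 : γ ^ 2 * (w ⬝ᵥ w) ≤ V := by
        have : γ ^ 2 * (w ⬝ᵥ w) ≤ γ ^ 2 * (ζ ⬝ᵥ (Qᵀ * Q) *ᵥ ζ) := by
          apply mul_le_mul_of_nonneg_left hw (by positivity)
        linarith
      have h3 : b ⬝ᵥ b ≤ V := le_trans hbb h2
      have h4 : ε * (b ⬝ᵥ b) ≤ ε * V := mul_le_mul_of_nonneg_left h3 hε0
      linarith
  have hVnn : 0 ≤ V := by simpa using hMps.dotProduct_mulVec_nonneg ζ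
  have main : (a + b) ⬝ᵥ M *ᵥ (a + b) ≤ lam * V := by
    have hτi : 0 < τ⁻¹ := inv_pos.mpr hτ
    have step1 : (a + b) ⬝ᵥ M *ᵥ (a + b) ≤ (1 + τ) * qa + (1 + τ⁻¹) * qb := by
      rw [hexp]; nlinarith [hcross]
    have step2 : (1 + τ⁻¹) * qb ≤ (1 + τ⁻¹) * (ε * V) :=
      mul_le_mul_of_nonneg_left hqbV (by positivity)
    calc (a + b) ⬝ᵥ M *ᵥ (a + b) ≤ (1 + τ) * qa + (1 + τ⁻¹) * qb := step1
      _ ≤ (lam - ε * (1 + τ⁻¹)) * V + (1 + τ⁻¹) * (ε * V) := by linarith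
      _ = lam * V := by ring
  refine ⟨main, fun hV1 => ?_⟩
  have hdet : IsUnit P.det := isUnit_iff_ne_zero.mpr (ne_of_gt hP.det_pos)
  letI : Invertible lam := invertibleOfNonzero hlam0.ne'
  have hinv : (lam • P)⁻¹ = lam⁻¹ • M := by
    rw [hMdef, Matrix.inv_smul (A := P) lam hdet, invOf_eq_inv lam]
  rw [hinv]
  have : (a + b) ⬝ᵥ (lam⁻¹ • M) *ᵥ (a + b) = lam⁻¹ * ((a + b) ⬝ᵥ M *ᵥ (a + b)) := by
    rw [Matrix.smul_mulVec, dotProduct_smul, smul_eq_mul]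
  rw [this]
  have h1 : lam⁻¹ * ((a + b) ⬝ᵥ M *ᵥ (a + b)) ≤ lam⁻¹ * (lam * V) :=
    mul_le_mul_of_nonneg_left main (by positivity)
  have h2 : lam⁻¹ * (lam * V) = V := by field_simp
  calc lam⁻¹ * ((a + b) ⬝ᵥ M *ᵥ (a + b)) ≤ lam⁻¹ * (lam * V) := h1
    _ = V := h2
    _ ≤ 1 := hV1
end
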